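/- Let P and Q be finite p-groups in CP₂ of the same order p^n. If |Ω_i(P)| = |Ω_i(Q)| for all natural numbers i, then ψ(P) = ψ(Q). -/

import Mathlib

/-- Sum of the orders of the elements of a group. -/
noncomputable def psi (G : Type*) [Group G] : ℕ := ∑ᶠ x : G, orderOf x

/-- `Omega p G i` is the subgroup generated by all `x` with `x ^ p ^ i = 1`. -/
def Omega (p : ℕ) (G : Type*) [Group G] (i : ℕ) : Subgroup G :=
  Subgroup.closure {x : G | x ^ p ^ i = 1}

/-- The class `CP₂`: `o(xy) ≤ max (o x) (o y)` for all `x y`. -/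
def CP2 (G : Type*) [Group G] : Prop :=
  ∀ x y : G, orderOf (x * y) ≤ max (orderOf x) (orderOf y)

lemma sum_pow_sub {p : ℕ} (hp : 1 ≤ p) (k : ℕ) :
    ∑ j ∈ Finset.range k, (p ^ (j + 1) - p ^ j) = p ^ k - 1 := by
  induction k with
  | zero => simp
  | succ k ih =>
    rw [Finset.sum_range_succ, ih]
    have h1 : 1 ≤ p ^ k := Nat.one_le_pow _ _ hp
    have h2 : p ^ k ≤ p ^ (k + 1) := Nat.pow_le_pow_right hp (by omega)
    omega

lemma omega_carrier {p : ℕ} (hp : p.Prime) {G : Type*} [Group G]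
    (hG : IsPGroup p G) (hcp : CP2 G) (j : ℕ) :
    (Omega p G j : Set G) = {x : G | x ^ p ^ j = 1} := by
  have hpos : 0 < p ^ j := Nat.pow_pos hp.pos
  have hmul : ∀ x y : G, x ^ p ^ j = 1 → y ^ p ^ j = 1 → (x * y) ^ p ^ j = 1 := by
    intro x y hx hy
    obtain ⟨k, hk⟩ := hG (x * y)
    obtain ⟨m, _, hm⟩ := (Nat.dvd_prime_pow hp).mp (orderOf_dvd_iff_pow_eq_one.mpr hk)
    have hle : orderOf (x * y) ≤ p ^ j :=
      (hcp x y).trans (max_le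
        (Nat.le_of_dvd hpos (orderOf_dvd_iff_pow_eq_one.mpr hx))
        (Nat.le_of_dvd hpos (orderOf_dvd_iff_pow_eq_one.mpr hy)))
    have hmj : m ≤ j := by
      by_contra h
      have : p ^ j < p ^ m := Nat.pow_lt_pow_right hp.one_lt (by omega)
      omega
    exact orderOf_dvd_iff_pow_eq_one.mp (hm ▸ pow_dvd_pow p hmj)
  let H : Subgroup G :=
    { carrier := {x : G | x ^ p ^ j = 1}
      one_mem' := one_pow _
      mul_mem' := fun hx hy => hmul _ _ hx hy
      inv_mem' := fun {x} hx => by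
        simp only [Set.mem_setOf_eq] at *
        rw [inv_pow, hx, inv_one] }
  have : Omega p G j = H := by
    rw [Omega]
    exact Subgroup.closure_eq H
  rw [this]
  rfl

lemma psi_eq {p n : ℕ} (hp : p.Prime) (G : Type*) [Group G] [Finite G]
    (hG : IsPGroup p G) (hcp : CP2 G) (hcard : Nat.card G = p ^ n) :
    psi G = p ^ n + ∑ j ∈ Finset.range n,
      (p ^ (j + 1) - p ^ j) * (p ^ n - Nat.card (Omega p G j)) := by
  classical
  have := Fintype.ofFinite G
  have hcard' : Fintype.card G = p ^ n := by rw [← Nat.card_eq_fintype_card, hcard]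
  -- per-element formula
  have hx : ∀ x : G, orderOf x = 1 + ∑ j ∈ Finset.range n,
      (if x ^ p ^ j = 1 then 0 else p ^ (j + 1) - p ^ j) := by
    intro x
    have hdvd : orderOf x ∣ p ^ n := by
      rw [← hcard]; exact orderOf_dvd_natCard x
    obtain ⟨k, hkn, hk⟩ := (Nat.dvd_prime_pow hp).mp hdvd
    have hcond : ∀ j : ℕ, (x ^ p ^ j = 1) ↔ k ≤ j := by
      intro j
      rw [← orderOf_dvd_iff_pow_eq_one, hk,
        Nat.pow_dvd_pow_iff_le_right hp.one_lt]
    rw [← Finset.sum_range_add_sum_Ico _ hkn]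
    have h1 : ∑ j ∈ Finset.range k, (if x ^ p ^ j = 1 then 0 else p ^ (j + 1) - p ^ j)
        = p ^ k - 1 := by
      rw [← sum_pow_sub hp.one_le k]
      apply Finset.sum_congr rfl
      intro j hj
      rw [Finset.mem_range] at hj
      rw [if_neg]
      rw [hcond]; omega
    have h2 : ∑ j ∈ Finset.Ico k n, (if x ^ p ^ j = 1 then 0 else p ^ (j + 1) - p ^ j)
        = 0 := by
      apply Finset.sum_eq_zero
      intro j hj
      rw [Finset.mem_Ico] at hj
      rw [if_pos]
      rw [hcond]; omega
    rw [h1, h2, hk]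
    have : 1 ≤ p ^ k := Nat.one_le_pow _ _ hp.pos
    omega
  have hpsi : psi G = ∑ x : G, orderOf x := finsum_eq_sum_of_fintype _
  rw [hpsi]
  calc ∑ x : G, orderOf x
      = ∑ x : G, (1 + ∑ j ∈ Finset.range n,
          (if x ^ p ^ j = 1 then 0 else p ^ (j + 1) - p ^ j)) := by
        exact Finset.sum_congr rfl fun x _ => hx x
    _ = Fintype.card G + ∑ j ∈ Finset.range n, ∑ x : G,
          (if x ^ p ^ j = 1 then 0 else p ^ (j + 1) - p ^ j) := by
        rw [Finset.sum_add_distrib, Finset.sum_const, Finset.card_univ, smul_eq_mul,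
          mul_one, Finset.sum_comm]
    _ = p ^ n + ∑ j ∈ Finset.range n,
          (p ^ (j + 1) - p ^ j) * (p ^ n - Nat.card (Omega p G j)) := by
        rw [hcard']
        congr 1
        apply Finset.sum_congr rfl
        intro j _
        have hOmega : Nat.card (Omega p G j)
            = (Finset.univ.filter (fun x : G => x ^ p ^ j = 1)).card := by
          have hc := omega_carrier hp hG hcp j
          calc Nat.card (Omega p G j) = Nat.card {x : G // x ^ p ^ j = 1} :=
                Nat.card_congr (Equiv.setCongr hc)
            _ = (Finset.univ.filter (fun x : G => x ^ p ^ j = 1)).card := by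
                rw [Nat.card_eq_fintype_card, Fintype.card_subtype]
        rw [hOmega]
        rw [Finset.sum_ite, Finset.sum_const, Finset.sum_const]
        simp only [smul_eq_mul, mul_zero, zero_add]
        rw [mul_comm]
        congr 1
        have := Finset.card_filter_add_card_filter_not
          (s := (Finset.univ : Finset G)) (p := fun x : G => x ^ p ^ j = 1)
        rw [Finset.card_univ, hcard'] at this
        omega

theorem stmt_9 {p n : ℕ} (hp : p.Prime) (P Q : Type*) [Group P] [Finite P]
    [Group Q] [Finite Q] (hPp : IsPGroup p P) (hQp : IsPGroup p Q)
    (hcpP : CP2 P) (hcpQ : CP2 Q)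
    (hcardP : Nat.card P = p ^ n) (hcardQ : Nat.card Q = p ^ n)
    (hcards : ∀ i : ℕ, Nat.card (Omega p P i) = Nat.card (Omega p Q i)) :
    psi P = psi Q := by
  rw [psi_eq hp P hPp hcpP hcardP, psi_eq hp Q hQp hcpQ hcardQ]
  simp only [hcards]
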